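/- Let φ be an L(B, B*)-valued function analytic on |z| < 1 + ε with φ(z) + φ(z)*|_B ≥ 0. Then for z, w in the open unit disk, k_φ(z,w) := (φ(z) + φ(w)*|_B)/(2(1 − z w̄)) = ∫₀^{2π} (φ(e^{it}) + φ(e^{it})*|_B)/(4π) · 1/((e^{it} − z)(e^{it} − w)^{*}) dt; in particular k_φ is a positive kernel on 𝔻. -/

import Mathlib

open scoped ComplexOrder
open Metric Real

/-- The conjugate dual of a complex normed space: continuous anti-linear functionals. -/
abbrev ConjDual (B : Type*) [NormedAddCommGroup B] [NormedSpace ℂ B] :=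
  B →SL[starRingEnd ℂ] ℂ

/-- The scalar pairing `⟨k_φ(z,w)b, c⟩` of the Carathéodory kernel
`k_φ(z,w) = (φ(z) + φ(w)*|_B)/(2(1 - z w̄))`. -/
noncomputable def caraKernel {B : Type*} [NormedAddCommGroup B] [NormedSpace ℂ B]
    (φ : ℂ → (B →L[ℂ] ConjDual B)) (z w : ℂ) (b c : B) : ℂ :=
  (2 * (1 - z * (starRingEnd ℂ) w))⁻¹ * (φ z b c + (starRingEnd ℂ) (φ w c b))

namespace CaraAux

theorem oneSubConjNe {w : ℂ} (hw : ‖w‖ < 1) {u : ℂ} (hu : ‖u‖ ≤ 1) :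
    1 - (starRingEnd ℂ) w * u ≠ 0 := by
  intro hcon
  have heq : (starRingEnd ℂ) w * u = 1 := by linear_combination -hcon
  have : ‖(starRingEnd ℂ) w * u‖ < 1 := by
    rw [norm_mul]
    have h1 : ‖(starRingEnd ℂ) w‖ < 1 := by simpa using hw
    calc ‖(starRingEnd ℂ) w‖ * ‖u‖ ≤ ‖(starRingEnd ℂ) w‖ * 1 :=
          mul_le_mul_of_nonneg_left hu (norm_nonneg _)
      _ < 1 := by simpa using h1
  rw [heq] at this; simp at this

theorem subNe {z E : ℂ} (hz : ‖z‖ < 1) (hE : ‖E‖ = 1) : E - z ≠ 0 := by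
  intro hcon
  have : E = z := by linear_combination hcon
  rw [this] at hE; rw [hE] at hz; exact lt_irrefl _ hz

theorem conjEqInv {E : ℂ} (hE : ‖E‖ = 1) : (starRingEnd ℂ) E = E⁻¹ := by
  have hE0 : E ≠ 0 := by intro hc; rw [hc] at hE; simp at hE
  have h1 : E * (starRingEnd ℂ) E = 1 := by
    rw [Complex.mul_conj, Complex.normSq_eq_norm_sq]
    norm_cast
    rw [show ‖E‖ = 1 from hE]; norm_num
  field_simp
  linear_combination h1

theorem Keq {z w E : ℂ} (hE : ‖E‖ = 1) (hw : ‖w‖ < 1) :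
    ((E - z) * (starRingEnd ℂ) (E - w))⁻¹
      = E * ((E - z) * (1 - (starRingEnd ℂ) w * E))⁻¹ := by
  have hE0 : E ≠ 0 := by intro hc; rw [hc] at hE; simp at hE
  have hwE : 1 - (starRingEnd ℂ) w * E ≠ 0 := oneSubConjNe hw hE.le
  have hinv : (starRingEnd ℂ) E = E⁻¹ := conjEqInv hE
  have hmain : ((starRingEnd ℂ) (E - w))⁻¹ = E * (1 - (starRingEnd ℂ) w * E)⁻¹ := by
    apply inv_eq_of_mul_eq_one_right
    rw [map_sub, hinv]
    have : (E⁻¹ - (starRingEnd ℂ) w) * (E * (1 - (starRingEnd ℂ) w * E)⁻¹)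
        = ((E⁻¹ - (starRingEnd ℂ) w) * E) * (1 - (starRingEnd ℂ) w * E)⁻¹ := by ring
    rw [this, sub_mul, inv_mul_cancel₀ hE0, mul_inv_cancel₀ hwE]
  rw [mul_inv, mul_inv, hmain]
  ring

theorem ptwise (z w f g E : ℂ) (hE : ‖E‖ = 1) (hz : ‖z‖ < 1) (hw : ‖w‖ < 1) :
    ((f + (starRingEnd ℂ) g) / (4 * (π:ℂ))) * ((E - z) * (starRingEnd ℂ) (E - w))⁻¹
      = (4 * (π:ℂ))⁻¹ * ((E * ((E - z) * (1 - (starRingEnd ℂ) w * E))⁻¹) * f)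
        + (starRingEnd ℂ) ((4 * (π:ℂ))⁻¹ *
            ((E * ((E - w) * (1 - (starRingEnd ℂ) z * E))⁻¹) * g)) := by
  have hK1 : ((E - z) * (starRingEnd ℂ) (E - w))⁻¹
      = E * ((E - z) * (1 - (starRingEnd ℂ) w * E))⁻¹ := Keq hE hw
  have hK2 : ((E - w) * (starRingEnd ℂ) (E - z))⁻¹
      = E * ((E - w) * (1 - (starRingEnd ℂ) z * E))⁻¹ := Keq hE hz
  rw [hK1, ← hK2]
  simp only [map_mul, map_inv₀, Complex.conj_conj, Complex.conj_ofReal, map_ofNat, map_sub]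
  rw [mul_comm ((starRingEnd ℂ) E - (starRingEnd ℂ) w) (E - z),
    show (E - z) * ((starRingEnd ℂ) E - (starRingEnd ℂ) w)
      = (E - z) * (starRingEnd ℂ) (E - w) by rw [map_sub], hK1]
  ring

theorem cauchyAux {z w : ℂ} (hz : z ∈ ball (0:ℂ) 1) (hw : w ∈ ball (0:ℂ) 1)
    (h : ℂ → ℂ) (hd : DifferentiableOn ℂ h (ball (0:ℂ) 1))
    (hc : ContinuousOn h (closedBall (0:ℂ) 1)) :
    (∫ t in (0:ℝ)..(2*π),
      (Complex.exp (t * Complex.I) *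
        ((Complex.exp (t * Complex.I) - z) *
          (1 - (starRingEnd ℂ) w * Complex.exp (t * Complex.I)))⁻¹) * h (Complex.exp (t * Complex.I)))
      = 2 * π * h z / (1 - (starRingEnd ℂ) w * z) := by
  have hw' : ‖w‖ < 1 := by simpa [mem_ball] using hw
  set H : ℂ → ℂ := fun u => (1 - (starRingEnd ℂ) w * u)⁻¹ * h u with hH
  have hHd : DiffContOnCl ℂ H (ball (0:ℂ) 1) := by
    constructor
    · apply DifferentiableOn.mul _ hd
      apply DifferentiableOn.inv
      · fun_prop
      · intro u hu
        exact oneSubConjNe hw' (le_of_lt (by simpa [mem_ball] using hu))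
    · rw [closure_ball (0:ℂ) one_ne_zero]
      apply ContinuousOn.mul _ hc
      apply ContinuousOn.inv₀ (by fun_prop)
      intro u hu
      exact oneSubConjNe hw' (by simpa [mem_closedBall] using hu)
  have key := hHd.circleIntegral_sub_inv_smul hz
  rw [circleIntegral] at key
  have hrw : ∀ t : ℝ, (deriv (circleMap 0 1) t) • ((circleMap 0 1 t - z)⁻¹ • H (circleMap 0 1 t))
      = Complex.I * ((Complex.exp (t * Complex.I) *
        ((Complex.exp (t * Complex.I) - z) *
          (1 - (starRingEnd ℂ) w * Complex.exp (t * Complex.I)))⁻¹) * h (Complex.exp (t * Complex.I))) := by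
    intro t
    have hcm : circleMap 0 1 t = Complex.exp (t * Complex.I) := by
      simp [circleMap]
    rw [deriv_circleMap, hcm, hH]
    simp only [smul_eq_mul, mul_inv]
    ring
  simp only [hrw] at key
  rw [intervalIntegral.integral_const_mul] at key
  have hI : (Complex.I : ℂ) ≠ 0 := Complex.I_ne_zero
  apply mul_left_cancel₀ hI
  rw [key, smul_eq_mul, hH]
  have hzne : 1 - (starRingEnd ℂ) w * z ≠ 0 :=
    oneSubConjNe hw' (le_of_lt (by simpa [mem_ball] using hz))
  field_simp

noncomputable def evalAt {B : Type*} [NormedAddCommGroup B] [NormedSpace ℂ B] (c : B) :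
    ConjDual B →L[ℂ] ℂ :=
  LinearMap.mkContinuous
    { toFun := fun L => L c, map_add' := fun _ _ => rfl, map_smul' := fun _ _ => rfl } ‖c‖
    (fun L => by simpa [mul_comm] using L.le_opNorm c)

theorem pairDiff {B : Type*} [NormedAddCommGroup B] [NormedSpace ℂ B]
    {φ : ℂ → (B →L[ℂ] ConjDual B)} {s : Set ℂ} (hφ : DifferentiableOn ℂ φ s) (b c : B) :
    DifferentiableOn ℂ (fun u => φ u b c) s := by
  have h1 : DifferentiableOn ℂ (fun u => φ u b) s :=
    hφ.clm_apply (differentiableOn_const b)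
  exact (evalAt c).differentiable.comp_differentiableOn h1

theorem intervalIntegral_conj' {f : ℝ → ℂ} {a b : ℝ} :
    (∫ t in a..b, (starRingEnd ℂ) (f t)) = (starRingEnd ℂ) (∫ t in a..b, f t) := by
  simp only [intervalIntegral.intervalIntegral_eq_integral_uIoc, integral_conj,
    Complex.real_smul, map_mul, Complex.conj_ofReal]

theorem normExp (t : ℝ) : ‖Complex.exp (t * Complex.I)‖ = 1 := by
  simpa using Complex.abs_exp_ofReal_mul_I t

theorem formulaAux {B : Type*} [NormedAddCommGroup B] [NormedSpace ℂ B]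
    (φ : ℂ → (B →L[ℂ] ConjDual B)) (ε : ℝ) (hε : 0 < ε)
    (hφ : DifferentiableOn ℂ φ (ball (0 : ℂ) (1 + ε)))
    {z w : ℂ} (hz : z ∈ ball (0:ℂ) 1) (hw : w ∈ ball (0:ℂ) 1) (b c : B) :
    caraKernel φ z w b c =
        ∫ t in (0 : ℝ)..(2 * π),
          ((φ (Complex.exp (t * Complex.I)) b c +
              (starRingEnd ℂ) (φ (Complex.exp (t * Complex.I)) c b)) / (4 * (π : ℂ))) *
            ((Complex.exp (t * Complex.I) - z) *
              (starRingEnd ℂ) (Complex.exp (t * Complex.I) - w))⁻¹ := by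
  have hz' : ‖z‖ < 1 := by simpa [mem_ball] using hz
  have hw' : ‖w‖ < 1 := by simpa [mem_ball] using hw
  have hsub : closedBall (0:ℂ) 1 ⊆ ball (0:ℂ) (1 + ε) :=
    closedBall_subset_ball (by linarith)
  set f : ℂ → ℂ := fun u => φ u b c with hf
  set g : ℂ → ℂ := fun u => φ u c b with hg
  set E : ℝ → ℂ := fun t => Complex.exp (t * Complex.I) with hE
  have hEmem : ∀ t, E t ∈ closedBall (0:ℂ) 1 := fun t => by
    simpa [mem_closedBall, dist_eq_norm, hE] using (normExp t).le
  have hfd : DifferentiableOn ℂ f (ball (0:ℂ) 1) :=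
    (pairDiff hφ b c).mono (ball_subset_ball (by linarith))
  have hgd : DifferentiableOn ℂ g (ball (0:ℂ) 1) :=
    (pairDiff hφ c b).mono (ball_subset_ball (by linarith))
  have hfc : ContinuousOn f (closedBall (0:ℂ) 1) :=
    ((pairDiff hφ b c).continuousOn).mono hsub
  have hgc : ContinuousOn g (closedBall (0:ℂ) 1) :=
    ((pairDiff hφ c b).continuousOn).mono hsub
  have hEcont : Continuous E := by fun_prop
  have hfE : Continuous fun t => f (E t) := hfc.comp_continuous hEcont hEmem
  have hgE : Continuous fun t => g (E t) := hgc.comp_continuous hEcont hEmem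
  -- the two halves
  set P : ℝ → ℂ := fun t =>
    (4 * (π:ℂ))⁻¹ * ((E t * ((E t - z) * (1 - (starRingEnd ℂ) w * E t))⁻¹) * f (E t)) with hP
  set Q : ℝ → ℂ := fun t =>
    (starRingEnd ℂ) ((4 * (π:ℂ))⁻¹ *
      ((E t * ((E t - w) * (1 - (starRingEnd ℂ) z * E t))⁻¹) * g (E t))) with hQ
  have hsplit : (∫ t in (0:ℝ)..(2*π),
      ((f (E t) + (starRingEnd ℂ) (g (E t))) / (4 * (π : ℂ))) *
        ((E t - z) * (starRingEnd ℂ) (E t - w))⁻¹)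
      = ∫ t in (0:ℝ)..(2*π), (P t + Q t) :=
    intervalIntegral.integral_congr (fun t _ => ptwise z w (f (E t)) (g (E t)) (E t)
      (normExp t) hz' hw')
  have hden1 : Continuous fun t => ((E t - z) * (1 - (starRingEnd ℂ) w * E t))⁻¹ := by
    apply Continuous.inv₀ (by fun_prop)
    intro t
    exact mul_ne_zero (subNe hz' (normExp t)) (oneSubConjNe hw' (normExp t).le)
  have hden2 : Continuous fun t => ((E t - w) * (1 - (starRingEnd ℂ) z * E t))⁻¹ := by
    apply Continuous.inv₀ (by fun_prop)
    intro t
    exact mul_ne_zero (subNe hw' (normExp t)) (oneSubConjNe hz' (normExp t).le)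
  have hPc : Continuous P := by
    apply Continuous.mul continuous_const
    exact (Continuous.mul (Continuous.mul hEcont hden1) hfE)
  have hQc : Continuous Q := by
    apply Complex.continuous_conj.comp
    apply Continuous.mul continuous_const
    exact (Continuous.mul (Continuous.mul hEcont hden2) hgE)
  have hPi : IntervalIntegrable P MeasureTheory.volume 0 (2*π) := hPc.intervalIntegrable _ _
  have hQi : IntervalIntegrable Q MeasureTheory.volume 0 (2*π) := hQc.intervalIntegrable _ _
  have hP' : (∫ t in (0:ℝ)..(2*π), P t) = (4 * (π:ℂ))⁻¹ * (2 * π * f z / (1 - (starRingEnd ℂ) w * z)) := by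
    rw [hP]
    rw [intervalIntegral.integral_const_mul]
    rw [cauchyAux hz hw f hfd hfc]
  have hQ' : (∫ t in (0:ℝ)..(2*π), Q t)
      = (starRingEnd ℂ) ((4 * (π:ℂ))⁻¹ * (2 * π * g w / (1 - (starRingEnd ℂ) z * w))) := by
    rw [hQ, intervalIntegral_conj']
    congr 1
    rw [intervalIntegral.integral_const_mul]
    rw [cauchyAux hw hz g hgd hgc]
  rw [hsplit, intervalIntegral.integral_add hPi hQi, hP', hQ']
  -- final arithmetic
  have hpi : (π:ℂ) ≠ 0 := by exact_mod_cast Real.pi_ne_zero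
  have h1 : 1 - (starRingEnd ℂ) w * z ≠ 0 := oneSubConjNe hw' hz'.le
  have h2 : 1 - (starRingEnd ℂ) z * w ≠ 0 := oneSubConjNe hz' hw'.le
  have h3 : 1 - z * (starRingEnd ℂ) w ≠ 0 := by rw [mul_comm]; exact h1
  rw [caraKernel]
  simp only [map_mul, map_inv₀, map_div₀, Complex.conj_conj, Complex.conj_ofReal, map_ofNat,
    map_sub, map_one]
  rw [show f z = φ z b c from rfl, show g w = φ w c b from rfl]
  field_simp
  ring

set_option maxHeartbeats 1000000 in
theorem posAux {B : Type*} [NormedAddCommGroup B] [NormedSpace ℂ B]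
    (φ : ℂ → (B →L[ℂ] ConjDual B)) (ε : ℝ) (hε : 0 < ε)
    (hφ : DifferentiableOn ℂ φ (ball (0 : ℂ) (1 + ε)))
    (hpos : ∀ z : ℂ, ‖z‖ ≤ 1 → ∀ b : B, 0 ≤ φ z b b + (starRingEnd ℂ) (φ z b b))
    (hform : ∀ z ∈ ball (0 : ℂ) 1, ∀ w ∈ ball (0 : ℂ) 1, ∀ b c : B,
      caraKernel φ z w b c =
        ∫ t in (0 : ℝ)..(2 * π),
          ((φ (Complex.exp (t * Complex.I)) b c +
              (starRingEnd ℂ) (φ (Complex.exp (t * Complex.I)) c b)) / (4 * (π : ℂ))) *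
            ((Complex.exp (t * Complex.I) - z) *
              (starRingEnd ℂ) (Complex.exp (t * Complex.I) - w))⁻¹)
    (n : ℕ) (z : Fin n → ℂ) (hz : ∀ i, z i ∈ ball (0 : ℂ) 1) (b : Fin n → B) :
    0 ≤ ∑ i, ∑ j, caraKernel φ (z i) (z j) (b j) (b i) := by
  classical
  have hz' : ∀ i, ‖z i‖ < 1 := fun i => by simpa [mem_ball] using hz i
  set E : ℝ → ℂ := fun t => Complex.exp (t * Complex.I) with hE
  obtain ⟨term, hterm⟩ : ∃ f : Fin n → Fin n → ℝ → ℂ, f = fun i j t =>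
      ((φ (E t) (b j) (b i) + (starRingEnd ℂ) (φ (E t) (b i) (b j))) / (4 * (π : ℂ))) *
        ((E t - z i) * (starRingEnd ℂ) (E t - z j))⁻¹ := ⟨_, rfl⟩
  -- continuity / integrability of each term
  have hsub : closedBall (0:ℂ) 1 ⊆ ball (0:ℂ) (1 + ε) := closedBall_subset_ball (by linarith)
  have hEcont : Continuous E := by fun_prop
  have hEmem : ∀ t, E t ∈ closedBall (0:ℂ) 1 := fun t => by
    simpa [mem_closedBall, dist_eq_norm, hE] using (normExp t).le
  have hpair : ∀ u v : B, Continuous fun t => φ (E t) u v := fun u v =>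
    (((pairDiff hφ u v).continuousOn).mono hsub).comp_continuous hEcont hEmem
  have hden : ∀ i j, Continuous fun t => ((E t - z i) * (starRingEnd ℂ) (E t - z j))⁻¹ := by
    intro i j
    apply Continuous.inv₀
    · exact (hEcont.sub continuous_const).mul ((hEcont.sub continuous_const).star)
    · intro t
      apply mul_ne_zero (subNe (hz' i) (normExp t))
      intro hc
      exact subNe (hz' j) (normExp t) (by simpa using congrArg (starRingEnd ℂ) hc)
  have htermcont : ∀ i j, Continuous (term i j) := by
    intro i j
    rw [hterm]
    exact (((hpair (b j) (b i)).add (hpair (b i) (b j)).star).div_const _).mul (hden i j)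
  -- rewrite each kernel entry as an integral and swap sums with the integral
  have hrw : ∀ i j, caraKernel φ (z i) (z j) (b j) (b i)
      = ∫ t in (0:ℝ)..(2*π), term i j t :=
    fun i j => by rw [hterm]; exact hform (z i) (hz i) (z j) (hz j) (b j) (b i)
  have hswap : ∑ i, ∑ j, caraKernel φ (z i) (z j) (b j) (b i)
      = ∫ t in (0:ℝ)..(2*π), ∑ i, ∑ j, term i j t := by
    have h1 : ∀ i, (∫ t in (0:ℝ)..(2*π), ∑ j, term i j t) = ∑ j, ∫ t in (0:ℝ)..(2*π), term i j t :=
      fun i => intervalIntegral.integral_finset_sum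
        (fun j _ => (htermcont i j).intervalIntegrable _ _)
    have h2 : (∫ t in (0:ℝ)..(2*π), ∑ i, ∑ j, term i j t)
        = ∑ i, ∫ t in (0:ℝ)..(2*π), ∑ j, term i j t :=
      intervalIntegral.integral_finset_sum
        (fun i _ => (continuous_finset_sum _
          (fun j _ => htermcont i j)).intervalIntegrable _ _)
    rw [h2]
    apply Finset.sum_congr rfl
    intro i _
    rw [h1]
    exact Finset.sum_congr rfl fun j _ => hrw i j
  rw [hswap]
  -- pointwise nonnegativity of the sum
  have hFpos : ∀ t : ℝ, 0 ≤ ∑ i, ∑ j, term i j t := by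
    intro t
    set lam : Fin n → ℂ := fun k => (E t - z k)⁻¹ with hlam
    set v : B := ∑ k, (starRingEnd ℂ) (lam k) • b k with hv
    have hphi : φ (E t) v v = ∑ j, ∑ i, ((starRingEnd ℂ) (lam j) * lam i) * φ (E t) (b j) (b i) := by
      rw [hv]
      simp only [map_sum, map_smul, map_smulₛₗ, ContinuousLinearMap.sum_apply,
        ContinuousLinearMap.smul_apply, ContinuousLinearMap.coe_sum', Finset.sum_apply,
        smul_eq_mul, Complex.conj_conj, Finset.mul_sum, Finset.sum_mul]
      rw [Finset.sum_comm]
      apply Finset.sum_congr rfl; intro j _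
      apply Finset.sum_congr rfl; intro i _
      ring
    have hkey : ∑ i, ∑ j, term i j t
        = (4 * (π:ℂ))⁻¹ * (φ (E t) v v + (starRingEnd ℂ) (φ (E t) v v)) := by
      have hconj : (starRingEnd ℂ) (∑ j, ∑ i, ((starRingEnd ℂ) (lam j) * lam i) * φ (E t) (b j) (b i))
          = ∑ j, ∑ i, (lam j * (starRingEnd ℂ) (lam i)) * (starRingEnd ℂ) (φ (E t) (b j) (b i)) := by
        simp only [map_sum, map_mul, Complex.conj_conj]
      rw [hphi, hconj, mul_add, Finset.mul_sum, Finset.mul_sum]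
      have hsplit2 : ∀ i j, term i j t
          = (4 * (π:ℂ))⁻¹ * (((starRingEnd ℂ) (lam j) * lam i) * φ (E t) (b j) (b i))
            + (4 * (π:ℂ))⁻¹ * ((lam i * (starRingEnd ℂ) (lam j)) * (starRingEnd ℂ) (φ (E t) (b i) (b j))) := by
        intro i j
        simp only [hterm]
        rw [show ((E t - z i) * (starRingEnd ℂ) (E t - z j))⁻¹
            = lam i * (starRingEnd ℂ) (lam j) by rw [hlam]; simp only [mul_inv, map_inv₀]]
        ring
      calc ∑ i, ∑ j, term i j t
          = ∑ i, ∑ j, ((4 * (π:ℂ))⁻¹ * (((starRingEnd ℂ) (lam j) * lam i) * φ (E t) (b j) (b i))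
            + (4 * (π:ℂ))⁻¹ * ((lam i * (starRingEnd ℂ) (lam j)) * (starRingEnd ℂ) (φ (E t) (b i) (b j)))) := by
            exact Finset.sum_congr rfl fun i _ => Finset.sum_congr rfl fun j _ => hsplit2 i j
        _ = (∑ i, ∑ j, (4 * (π:ℂ))⁻¹ * (((starRingEnd ℂ) (lam j) * lam i) * φ (E t) (b j) (b i)))
            + ∑ i, ∑ j, (4 * (π:ℂ))⁻¹ * ((lam i * (starRingEnd ℂ) (lam j)) * (starRingEnd ℂ) (φ (E t) (b i) (b j))) := by
            rw [← Finset.sum_add_distrib]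
            exact Finset.sum_congr rfl fun i _ => Finset.sum_add_distrib
        _ = (∑ j, ∑ i, (4 * (π:ℂ))⁻¹ * (((starRingEnd ℂ) (lam j) * lam i) * φ (E t) (b j) (b i)))
            + ∑ j, ∑ i, (4 * (π:ℂ))⁻¹ * ((lam j * (starRingEnd ℂ) (lam i)) * (starRingEnd ℂ) (φ (E t) (b j) (b i))) := by
            rw [Finset.sum_comm]
        _ = _ := by
            congr 1 <;>
              exact Finset.sum_congr rfl fun j _ => (Finset.mul_sum _ _ _).symm
    rw [hkey]
    have h1 : 0 ≤ φ (E t) v v + (starRingEnd ℂ) (φ (E t) v v) :=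
      hpos (E t) (normExp t).le v
    have h2 : (0:ℂ) ≤ (4 * (π:ℂ))⁻¹ := by
      rw [show (4 * (π:ℂ))⁻¹ = (((4 * π)⁻¹ : ℝ) : ℂ) by push_cast; ring]
      rw [Complex.zero_le_real]
      positivity
    exact mul_nonneg h2 h1
  -- conclude: the integrand is a nonnegative real
  have hre : ∀ t : ℝ, (∑ i, ∑ j, term i j t) = (((∑ i, ∑ j, term i j t).re : ℝ) : ℂ) := by
    intro t
    have h := Complex.nonneg_iff.mp (hFpos t)
    have him : (∑ i, ∑ j, term i j t).im = 0 := h.2.symm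
    refine (Complex.ext ?_ ?_).symm
    · simp
    · simp [him]
  rw [intervalIntegral.integral_congr (g := fun t => (((∑ i, ∑ j, term i j t).re : ℝ) : ℂ))
    (fun t _ => hre t)]
  rw [intervalIntegral.integral_ofReal]
  rw [Complex.zero_le_real]
  apply intervalIntegral.integral_nonneg (by positivity)
  intro u _
  exact (Complex.nonneg_iff.mp (hFpos u)).1

end CaraAux


/-- For `φ` analytic on a disk of radius `1 + ε` with positive real part, the kernel
`k_φ(z,w)` is given by
`∫₀^{2π} (φ(e^{it}) + φ(e^{it})*|_B)/(4π) · ((e^{it}−z)(e^{it}−w)^*)⁻¹ dt`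
(weakly, paired against `b, c ∈ B`); in particular `k_φ` is a positive kernel on the open
unit disk. -/
theorem caratheodory_kernel_integral_formula {B : Type*} [NormedAddCommGroup B]
    [NormedSpace ℂ B] [CompleteSpace B] [TopologicalSpace.SeparableSpace B]
    (φ : ℂ → (B →L[ℂ] ConjDual B)) (ε : ℝ) (hε : 0 < ε)
    (hφ : DifferentiableOn ℂ φ (ball (0 : ℂ) (1 + ε)))
    (hpos : ∀ z : ℂ, ‖z‖ ≤ 1 → ∀ b : B, 0 ≤ φ z b b + (starRingEnd ℂ) (φ z b b)) :
    (∀ z ∈ ball (0 : ℂ) 1, ∀ w ∈ ball (0 : ℂ) 1, ∀ b c : B,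
      caraKernel φ z w b c =
        ∫ t in (0 : ℝ)..(2 * π),
          ((φ (Complex.exp (t * Complex.I)) b c +
              (starRingEnd ℂ) (φ (Complex.exp (t * Complex.I)) c b)) / (4 * (π : ℂ))) *
            ((Complex.exp (t * Complex.I) - z) *
              (starRingEnd ℂ) (Complex.exp (t * Complex.I) - w))⁻¹) ∧
    (∀ (n : ℕ) (z : Fin n → ℂ), (∀ i, z i ∈ ball (0 : ℂ) 1) → ∀ b : Fin n → B,
      0 ≤ ∑ i, ∑ j, caraKernel φ (z i) (z j) (b j) (b i)) := by
  constructor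
  · intro z hz w hw b c
    exact CaraAux.formulaAux φ ε hε hφ hz hw b c
  · intro n z hz b
    exact CaraAux.posAux φ ε hε hφ hpos
      (fun z hz w hw b c => CaraAux.formulaAux φ ε hε hφ hz hw b c) n z hz b
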